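/- Let X and Y be locally compact, Hausdorff, second countable, totally disconnected topological spaces and let σ : X → Y be a surjective local homeomorphism. Then σ admits a continuous section: there exists a continuous map φ : Y → X such that σ(φ(y)) = y for every y ∈ Y. -/
import Mathlib

/-- Every surjective local homeomorphism between locally compact, Hausdorff,
second countable, totally disconnected spaces admits a continuous section. -/
theorem surjective_localHomeomorph_has_continuous_section
    {X Y : Type*} [TopologicalSpace X] [TopologicalSpace Y]
    [LocallyCompactSpace X] [T2Space X] [SecondCountableTopology X]
    [TotallyDisconnectedSpace X]
    [LocallyCompactSpace Y] [T2Space Y] [SecondCountableTopology Y]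
    [TotallyDisconnectedSpace Y]
    (σ : X → Y) (hσ : IsLocalHomeomorph σ) (hsurj : Function.Surjective σ) :
    ∃ φ : Y → X, Continuous φ ∧ ∀ y : Y, σ (φ y) = y := by
  classical
  -- Step 1: every point has a clopen neighbourhood with a local section
  have key : ∀ y : Y, ∃ V : Set Y, IsClopen V ∧ y ∈ V ∧
      ∃ s : Y → X, ContinuousOn s V ∧ ∀ z ∈ V, σ (s z) = z := by
    intro y
    obtain ⟨x, hx⟩ := hsurj y
    obtain ⟨e, hxe, hfe⟩ := hσ x
    have hyT : y ∈ e.target := by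
      rw [← hx, hfe]; exact e.map_source hxe
    obtain ⟨V, hVclopen, hyV, hVT⟩ :=
      (loc_compact_Haus_tot_disc_of_zero_dim (H := Y)).mem_nhds_iff.1
        (e.open_target.mem_nhds hyT)
    refine ⟨V, hVclopen, hyV, e.symm, e.continuousOn_symm.mono hVT, fun z hz => ?_⟩
    have hzT := hVT hz
    calc σ (e.symm z) = e (e.symm z) := by rw [hfe]
      _ = z := e.right_inv hzT
  choose V hVclopen hmemV s hscont hssec using key
  -- Step 2: countable subcover
  have hcover : ⋃ y, V y = Set.univ :=
    Set.eq_univ_of_forall fun y => Set.mem_iUnion.2 ⟨y, hmemV y⟩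
  obtain ⟨T, hTcount, hTcover⟩ :=
    TopologicalSpace.isOpen_iUnion_countable V (fun y => (hVclopen y).2)
  rw [hcover] at hTcover
  rcases isEmpty_or_nonempty Y with hY | hY
  · exact ⟨fun y => hY.elim y, continuous_of_discreteTopology, fun y => hY.elim y⟩
  have hTne : T.Nonempty := by
    rcases T.eq_empty_or_nonempty with h | h
    · exfalso
      obtain ⟨y⟩ := hY
      have := hTcover ▸ Set.mem_univ y
      simp [h] at this
    · exact h
  obtain ⟨u, hu⟩ := hTcount.exists_eq_range hTne
  -- indexed family
  set W : ℕ → Set Y := fun n => V (u n) with hW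
  have hWcover : ∀ y : Y, ∃ n, y ∈ W n := by
    intro y
    have : y ∈ ⋃ i ∈ T, V i := hTcover ▸ Set.mem_univ y
    obtain ⟨i, hiT, hyi⟩ := Set.mem_iUnion₂.1 this
    rw [hu] at hiT
    obtain ⟨n, rfl⟩ := hiT
    exact ⟨n, hyi⟩
  -- glue
  set φ : Y → X := fun y => s (u (Nat.find (hWcover y))) y with hφ
  have hsecφ : ∀ y : Y, σ (φ y) = y := fun y =>
    hssec _ _ (Nat.find_spec (hWcover y))
  refine ⟨φ, ?_, hsecφ⟩
  rw [continuous_iff_continuousAt]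
  intro y
  set n := Nat.find (hWcover y) with hn
  have hyn : y ∈ W n := Nat.find_spec (hWcover y)
  set U : Set Y := W n ∩ ⋂ m ∈ Finset.range n, (W m)ᶜ with hU
  have hUopen : IsOpen U := by
    apply IsOpen.inter (hVclopen _).2
    exact isOpen_biInter_finset fun m _ => (hVclopen _).1.isOpen_compl
  have hyU : y ∈ U := by
    refine ⟨hyn, Set.mem_iInter₂.2 fun m hm => ?_⟩
    exact Nat.find_min (hWcover y) (Finset.mem_range.1 hm)
  have heq : ∀ z ∈ U, φ z = s (u n) z := by
    intro z hz
    have h1 : z ∈ W n := hz.1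
    have h2 : ∀ m < n, z ∉ W m := fun m hm =>
      Set.mem_iInter₂.1 hz.2 m (Finset.mem_range.2 hm)
    have : Nat.find (hWcover z) = n := by
      apply le_antisymm (Nat.find_le h1)
      by_contra h
      exact h2 _ (lt_of_not_ge h) (Nat.find_spec (hWcover z))
    simp only [hφ, this]
  have hca : ContinuousAt (s (u n)) y :=
    (hscont (u n)).continuousAt ((hVclopen (u n)).2.mem_nhds hyn)
  refine hca.congr ?_
  filter_upwards [hUopen.mem_nhds hyU] with z hz using (heq z hz).symm
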